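/- Let T_s, T_1, n, A > 0 and P ∈ (0,1), and set N* = sqrt( T_1²/(4T_s²) − n·T_1/(T_s·log P) ) − T_1/(2T_s). Then N* is the unique global maximizer over N ∈ (0, ∞) of the throughput R(N) = A·P^(N/n)·N/(T_1 + T_s·N). -/

import Mathlib

open Real

theorem stmt_5 (Ts T1 n A : ℝ) (hTs : 0 < Ts) (hT1 : 0 < T1) (hn : 0 < n) (hA : 0 < A)
    (P : ℝ) (hP : P ∈ Set.Ioo (0:ℝ) 1)
    (Nstar : ℝ)
    (hNstar : Nstar = Real.sqrt (T1 ^ 2 / (4 * Ts ^ 2) - n * T1 / (Ts * Real.log P))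
        - T1 / (2 * Ts))
    (R : ℝ → ℝ) (hR : ∀ N, R N = A * P ^ (N / n) * N / (T1 + Ts * N)) :
    0 < Nstar ∧ ∀ N, 0 < N → N ≠ Nstar → R N < R Nstar := by
  obtain ⟨hP0, hP1⟩ := hP
  set L := Real.log P with hLdef
  have hL : L < 0 := Real.log_neg hP0 hP1
  have hLne : L ≠ 0 := ne_of_lt hL
  have hpos : ∀ N : ℝ, 0 < N → 0 < T1 + Ts * N := fun N hN => by nlinarith
  set D := T1 ^ 2 / (4 * Ts ^ 2) - n * T1 / (Ts * L) with hDdef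
  have hneg : n * T1 / (Ts * L) < 0 :=
    div_neg_of_pos_of_neg (by positivity) (mul_neg_of_pos_of_neg hTs hL)
  have hD : 0 < D := by
    have h1 : 0 < T1 ^ 2 / (4 * Ts ^ 2) := by positivity
    simp only [hDdef]; linarith
  have hsq : Real.sqrt D ^ 2 = D := Real.sq_sqrt hD.le
  have hNpos : 0 < Nstar := by
    have h2 : (T1 / (2 * Ts)) ^ 2 < D := by
      have he : (T1 / (2 * Ts)) ^ 2 = T1 ^ 2 / (4 * Ts ^ 2) := by
        field_simp; ring
      simp only [hDdef, he]; linarith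
    have h3 : T1 / (2 * Ts) < Real.sqrt D := by
      calc T1 / (2 * Ts) = Real.sqrt ((T1 / (2 * Ts)) ^ 2) := by
            rw [Real.sqrt_sq (by positivity)]
        _ < Real.sqrt D := Real.sqrt_lt_sqrt (by positivity) h2
    rw [hNstar]; linarith
  have hNne : Nstar ≠ 0 := ne_of_gt hNpos
  have hTNpos : 0 < T1 + Ts * Nstar := hpos _ hNpos
  have hTNne : T1 + Ts * Nstar ≠ 0 := ne_of_gt hTNpos
  -- key quadratic identity
  have hsum : Nstar + T1 / (2 * Ts) = Real.sqrt D := by rw [hNstar]; ring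
  have hsq2 : (Nstar + T1 / (2 * Ts)) ^ 2 = T1 ^ 2 / (4 * Ts ^ 2) - n * T1 / (Ts * L) := by
    rw [hsum, hsq]
  have hTsne : Ts ≠ 0 := ne_of_gt hTs
  have key : Nstar * (T1 + Ts * Nstar) = -(n * T1 / L) := by
    field_simp at hsq2
    have key1 : Ts ^ 4 * (Ts * L * Nstar ^ 2 + L * T1 * Nstar + n * T1) = 0 := by
      linear_combination Ts ^ 3 * hsq2 / 16
    have key0 : Ts * L * Nstar ^ 2 + L * T1 * Nstar + n * T1 = 0 := by
      rcases mul_eq_zero.mp key1 with h | h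
      · exact absurd h (pow_ne_zero 4 hTsne)
      · exact h
    field_simp
    linear_combination key0
  -- the log of R and its derivative
  set f : ℝ → ℝ := fun N => Real.log A + N / n * L + Real.log N - Real.log (T1 + Ts * N)
    with hfdef
  set g : ℝ → ℝ := fun N => L / n + N⁻¹ - Ts / (T1 + Ts * N) with hgdef
  have hfd : ∀ N : ℝ, 0 < N → HasDerivAt f (g N) N := by
    intro N hN
    have h1 : HasDerivAt (fun N : ℝ => N / n * L) (L / n) N := by
      have := ((hasDerivAt_id N).div_const n).mul_const L
      simpa [one_div, mul_comm, div_eq_mul_inv] using this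
    have h2 : HasDerivAt Real.log N⁻¹ N := Real.hasDerivAt_log (ne_of_gt hN)
    have h3 : HasDerivAt (fun N : ℝ => T1 + Ts * N) Ts N := by
      simpa using ((hasDerivAt_id N).const_mul Ts).const_add T1
    have h4 : HasDerivAt (fun N : ℝ => Real.log (T1 + Ts * N)) (Ts / (T1 + Ts * N)) N :=
      h3.log (ne_of_gt (hpos N hN))
    have := (((hasDerivAt_const N (Real.log A)).add h1).add h2).sub h4
    rw [show g N = 0 + L / n + N⁻¹ - Ts / (T1 + Ts * N) by simp only [hgdef]; ring]
    exact this
  have hgd : ∀ N : ℝ, 0 < N →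
      HasDerivAt g (-(N ^ 2)⁻¹ + Ts ^ 2 / (T1 + Ts * N) ^ 2) N := by
    intro N hN
    have h2 : HasDerivAt (fun N : ℝ => N⁻¹) (-(N ^ 2)⁻¹) N := by
      simpa using hasDerivAt_inv (ne_of_gt hN)
    have h3 : HasDerivAt (fun N : ℝ => T1 + Ts * N) Ts N := by
      simpa using ((hasDerivAt_id N).const_mul Ts).const_add T1
    have h4 : HasDerivAt (fun N : ℝ => Ts / (T1 + Ts * N))
        (-(Ts ^ 2 / (T1 + Ts * N) ^ 2)) N := by
      have := (h3.inv (ne_of_gt (hpos N hN))).const_mul Ts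
      rw [show (fun N : ℝ => Ts / (T1 + Ts * N)) = fun N => Ts * (T1 + Ts * N)⁻¹ by
          funext x; rw [div_eq_mul_inv],
        show -(Ts ^ 2 / (T1 + Ts * N) ^ 2) = Ts * (-Ts / (T1 + Ts * N) ^ 2) by ring]
      exact this
    have := ((hasDerivAt_const N (L / n)).add h2).sub h4
    rw [show -(N ^ 2)⁻¹ + Ts ^ 2 / (T1 + Ts * N) ^ 2
        = 0 + -(N ^ 2)⁻¹ - -(Ts ^ 2 / (T1 + Ts * N) ^ 2) by ring]
    exact this
  have hg'neg : ∀ N : ℝ, 0 < N → -(N ^ 2)⁻¹ + Ts ^ 2 / (T1 + Ts * N) ^ 2 < 0 := by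
    intro N hN
    have h1 : 0 < T1 + Ts * N := hpos N hN
    have h3 : Ts ^ 2 / (T1 + Ts * N) ^ 2 < 1 / N ^ 2 :=
      (div_lt_div_iff₀ (by positivity) (by positivity)).mpr (by nlinarith [sq_nonneg T1, mul_pos (mul_pos hT1 hTs) hN])
    have h4 : (N ^ 2)⁻¹ = 1 / N ^ 2 := (one_div _).symm
    linarith
  have hganti : StrictAntiOn g (Set.Ioi (0:ℝ)) := by
    apply strictAntiOn_of_deriv_neg (convex_Ioi 0)
    · exact fun x hx => ((hgd x hx).continuousAt).continuousWithinAt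
    · intro x hx
      rw [interior_Ioi] at hx
      rw [(hgd x hx).deriv]
      exact hg'neg x hx
  have hgN : g Nstar = 0 := by
    show L / n + Nstar⁻¹ - Ts / (T1 + Ts * Nstar) = 0
    have h5 : Nstar⁻¹ - Ts / (T1 + Ts * Nstar) = T1 / (Nstar * (T1 + Ts * Nstar)) := by
      field_simp
      ring
    rw [add_sub_assoc, h5, key]
    field_simp
    ring
  have hRexp : ∀ N : ℝ, 0 < N → R N = Real.exp (f N) := by
    intro N hN
    have hrp : P ^ (N / n) = Real.exp (N / n * L) := by
      rw [Real.rpow_def_of_pos hP0, mul_comm]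
    show R N = Real.exp (Real.log A + N / n * L + Real.log N - Real.log (T1 + Ts * N))
    rw [hR N, hrp, Real.exp_sub, Real.exp_add, Real.exp_add, Real.exp_log hA,
      Real.exp_log hN, Real.exp_log (hpos N hN)]
  refine ⟨hNpos, ?_⟩
  intro N hN hne
  have hflt : f N < f Nstar := by
    rcases lt_or_gt_of_ne hne with h | h
    · obtain ⟨c, hc, hceq⟩ := exists_hasDerivAt_eq_slope f g h
        (fun x hx => ((hfd x (lt_of_lt_of_le hN hx.1)).continuousAt).continuousWithinAt)
        (fun x hx => hfd x (lt_trans hN hx.1))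
      have hgc : 0 < g c := by
        have := hganti (Set.mem_Ioi.mpr (lt_trans hN hc.1)) (Set.mem_Ioi.mpr hNpos) hc.2
        rw [hgN] at this
        linarith
      rw [hceq] at hgc
      have hd : (0:ℝ) < Nstar - N := sub_pos.mpr h
      rw [lt_div_iff₀ hd] at hgc
      linarith
    · obtain ⟨c, hc, hceq⟩ := exists_hasDerivAt_eq_slope f g h
        (fun x hx => ((hfd x (lt_of_lt_of_le hNpos hx.1)).continuousAt).continuousWithinAt)
        (fun x hx => hfd x (lt_trans hNpos hx.1))
      have hgc : g c < 0 := by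
        have := hganti (Set.mem_Ioi.mpr hNpos) (Set.mem_Ioi.mpr (lt_trans hNpos hc.1)) hc.1
        rw [hgN] at this
        linarith
      rw [hceq] at hgc
      have hd : (0:ℝ) < N - Nstar := sub_pos.mpr h
      rw [div_lt_iff₀ hd] at hgc
      linarith
  rw [hRexp N hN, hRexp Nstar hNpos]
  exact Real.exp_lt_exp.mpr hflt
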